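/- arXiv:2509.07004 — 3 statements merged into one kernel-verified Lean document; each statement's English description precedes it below -/
import Mathlib

section
/- For every prime p and every positive integer n, the restricted totient sum Δ(n,p) satisfies the identity Δ(n,p) = (p-1) · Σ_{α=1}^{⌊log n / log p⌋} Ψ(⌊n/p^α⌋), where Ψ(x) = Σ_{k≤x} φ(k). -/
open Finset

/-- `Ψ(x) = Σ_{k ≤ x} φ(k)` for a natural number argument. -/
def Psi (x : ℕ) : ℕ := ∑ k ∈ Finset.Icc 1 x, Nat.totient k

/-- `Δ(n,p) = Σ_{k ≤ n, p ∣ k} φ(k)`. -/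
def Delta (n p : ℕ) : ℕ := ∑ k ∈ (Finset.Icc 1 n).filter (fun k => p ∣ k), Nat.totient k

lemma delta_reindex (p n : ℕ) (hp : p.Prime) :
    Delta n p = ∑ j ∈ Finset.Icc 1 (n / p), Nat.totient (p * j) := by
  unfold Delta
  rw [show (Finset.Icc 1 n).filter (fun k => p ∣ k)
      = (Finset.Icc 1 (n / p)).image (fun j => p * j) from ?_]
  · rw [Finset.sum_image]
    intro a _ b _ h
    exact Nat.eq_of_mul_eq_mul_left hp.pos h
  · ext k
    simp only [Finset.mem_filter, Finset.mem_Icc, Finset.mem_image]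
    constructor
    · rintro ⟨⟨hk1, hkn⟩, j, rfl⟩
      refine ⟨j, ⟨?_, ?_⟩, rfl⟩
      · rcases Nat.eq_zero_or_pos j with rfl | h; · simp at hk1
        exact h
      · exact Nat.le_div_iff_mul_le hp.pos |>.mpr (by linarith [hkn])
    · rintro ⟨j, ⟨hj1, hjn⟩, rfl⟩
      refine ⟨⟨?_, ?_⟩, j, rfl⟩
      · exact Nat.one_le_iff_ne_zero.mpr (Nat.mul_ne_zero hp.pos.ne' (by omega))
      · calc p * j ≤ p * (n / p) := Nat.mul_le_mul_left p hjn
          _ ≤ n := Nat.mul_div_le n p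

lemma totient_p_mul (p j : ℕ) (hp : p.Prime) :
    Nat.totient (p * j) = (p - 1) * Nat.totient j
      + (if p ∣ j then Nat.totient j else 0) := by
  by_cases h : p ∣ j
  · rw [Nat.totient_mul_of_prime_of_dvd hp h, if_pos h]
    conv_lhs => rw [← Nat.succ_pred_eq_of_pos hp.pos]
    rw [Nat.succ_mul]
    rfl
  · rw [Nat.totient_mul ((Nat.Prime.coprime_iff_not_dvd hp).mpr h),
      Nat.totient_prime hp, if_neg h, add_zero]

lemma delta_rec (p n : ℕ) (hp : p.Prime) :
    Delta n p = (p - 1) * Psi (n / p) + Delta (n / p) p := by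
  rw [delta_reindex p n hp]
  simp only [totient_p_mul _ _ hp]
  rw [Finset.sum_add_distrib, ← Finset.sum_filter]
  unfold Psi Delta
  rw [Finset.mul_sum]

lemma delta_formula (p : ℕ) (hp : p.Prime) :
    ∀ B n : ℕ, n < p ^ (B + 1) →
      Delta n p = (p - 1) * ∑ α ∈ Finset.range B, Psi (n / p ^ (α + 1)) := by
  intro B
  induction B with
  | zero =>
    intro n hn
    rw [pow_one] at hn
    simp only [Finset.range_zero, Finset.sum_empty, Nat.mul_zero, Delta]
    apply Finset.sum_eq_zero
    intro k hk
    simp only [Finset.mem_filter, Finset.mem_Icc] at hk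
    exact absurd (Nat.le_of_dvd (by omega) hk.2) (by omega)
  | succ B ih =>
    intro n hn
    have hdiv : n / p < p ^ (B + 1) := by
      rw [Nat.div_lt_iff_lt_mul hp.pos, ← pow_succ]; exact hn
    rw [delta_rec p n hp, ih (n / p) hdiv, Finset.sum_range_succ', pow_one,
      Nat.mul_add, add_comm]
    congr 2
    apply Finset.sum_congr rfl
    intro α _
    congr 1
    rw [Nat.div_div_eq_div_mul, ← pow_succ']

/-- For every prime `p` and positive integer `n`,
`Δ(n,p) = (p-1) · Σ_{α=1}^{⌊log n / log p⌋} Ψ(⌊n / p^α⌋)`. -/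
theorem stmt_0 (p n : ℕ) (hp : p.Prime) (hn : 1 ≤ n) :
    Delta n p =
      (p - 1) *
        ∑ α ∈ Finset.Icc 1 ⌊Real.log n / Real.log p⌋₊, Psi (n / p ^ α) := by
  have hfloor : ⌊Real.log n / Real.log p⌋₊ = Nat.log p n := by
    have h1 : Real.log n / Real.log p = Real.logb p n := rfl
    rw [h1, ← Int.floor_toNat, Real.floor_logb_natCast (Nat.cast_nonneg n),
      Int.log_natCast, Int.toNat_natCast]
  rw [hfloor, ← Finset.Ico_add_one_right_eq_Icc, Finset.sum_Ico_eq_sum_range,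
    Nat.add_sub_cancel,
    delta_formula p hp (Nat.log p n) n (Nat.lt_pow_succ_log_self hp.one_lt n)]
  congr 1
  exact Finset.sum_congr rfl fun i _ => by rw [add_comm]
end

section
/- There exists an absolute constant C > 0 such that for every prime p and every integer n ≥ 2, the restricted totient sum satisfies |Δ(n,p) − 3 n² / (π² (p+1))| ≤ C · n · log n. -/
open Finset

namespace DeltaAux

open ArithmeticFunction Real Filter Topology
open scoped ArithmeticFunction.Moebius

/-! ### Gauss sums and floor bounds -/

lemma sum_Icc_id_real (m : ℕ) : ∑ e ∈ Icc 1 m, (e : ℝ) = m * (m + 1) / 2 := by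
  have h : (∑ e ∈ Icc 1 m, e) * 2 = m * (m + 1) := by
    have h1 : ∑ e ∈ Icc 1 m, e = ∑ e ∈ range (m + 1), e := by
      rw [Finset.range_eq_Ico, ← Finset.Ico_add_one_right_eq_Icc]
      apply Finset.sum_subset
      · intro x hx; simp at hx ⊢; omega
      · intro x hx hx'; simp at hx hx'; omega
    rw [h1, Finset.sum_range_id_mul_two]
    simp [Nat.mul_comm]
  have := congrArg (fun x : ℕ => (x : ℝ)) h
  push_cast at this
  linarith

lemma floor_div_bounds (n q : ℕ) (hq : 1 ≤ q) :
    ((n / q : ℕ) : ℝ) ≤ (n : ℝ) / q ∧ (n : ℝ) / q < (n / q : ℕ) + 1 := by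
  have hq0 : (0 : ℝ) < q := by exact_mod_cast hq
  constructor
  · exact Nat.cast_div_le
  · rw [div_lt_iff₀ hq0]
    have h : n < (n / q + 1) * q := by
      nlinarith [Nat.div_add_mod n q, Nat.mod_lt n (show 0 < q from hq)]
    exact_mod_cast h

lemma Tbound (n q : ℕ) (hq : 1 ≤ q) :
    |(∑ e ∈ Icc 1 (n / q), (e : ℝ)) - ((n : ℝ) / q) ^ 2 / 2| ≤ (n : ℝ) / q := by
  obtain ⟨h1, h2⟩ := floor_div_bounds n q hq
  have hx0 : (0:ℝ) ≤ (n : ℝ) / q := by positivity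
  rw [sum_Icc_id_real, abs_le]
  rcases Nat.eq_zero_or_pos (n / q) with h0 | h0
  · rw [h0] at h2 ⊢
    push_cast at h2 ⊢
    constructor <;> nlinarith
  · have hm1 : (1 : ℝ) ≤ ((n / q : ℕ) : ℝ) := by exact_mod_cast h0
    constructor <;> nlinarith

/-! ### Möbius basics -/

lemma abs_moebius_le_one (d : ℕ) : |(μ d : ℝ)| ≤ 1 := by
  rcases eq_or_ne (μ d) 0 with h | h
  · simp [h]
  · have := moebius_ne_zero_iff_squarefree.mp h
    rw [moebius_apply_of_squarefree this]
    push_cast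
    rw [abs_pow, abs_neg, abs_one, one_pow]

lemma totient_moebius (k : ℕ) (hk : 0 < k) :
    (Nat.totient k : ℝ) = ∑ x ∈ k.divisorsAntidiagonal, (μ x.1 : ℝ) * x.2 := by
  have h : ∀ m, m > 0 → ∑ i ∈ Nat.divisors m, ((Nat.totient i : ℝ)) = (m : ℝ) := by
    intro m hm
    rw [← Nat.cast_sum]
    exact_mod_cast congrArg (fun x : ℕ => (x : ℝ)) (Nat.sum_totient m)
  exact ((sum_eq_iff_sum_mul_moebius_eq (R := ℝ)
    (f := fun i => (Nat.totient i : ℝ)) (g := fun i => (i : ℝ))).mp h k hk).symm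

/-! ### The combinatorial identity -/

lemma biUnion_eq (n p : ℕ) :
    ((Icc 1 n).filter (fun k => p ∣ k)).biUnion (fun k => k.divisorsAntidiagonal)
      = ((Icc 1 n) ×ˢ (Icc 1 n)).filter (fun x => x.1 * x.2 ≤ n ∧ p ∣ x.1 * x.2) := by
  ext x
  simp only [mem_biUnion, mem_filter, mem_Icc, Nat.mem_divisorsAntidiagonal, mem_product]
  constructor
  · rintro ⟨k, ⟨⟨hk1, hk2⟩, hpk⟩, hxk, hk0⟩
    have ha : 0 < x.1 := by
      rcases Nat.eq_zero_or_pos x.1 with h | h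
      · exfalso; rw [h, zero_mul] at hxk; omega
      · exact h
    have hb : 0 < x.2 := by
      rcases Nat.eq_zero_or_pos x.2 with h | h
      · exfalso; rw [h, mul_zero] at hxk; omega
      · exact h
    have h1 : x.1 ≤ n := le_trans (Nat.le_mul_of_pos_right x.1 hb) (hxk ▸ hk2)
    have h2 : x.2 ≤ n := le_trans (Nat.le_mul_of_pos_left x.2 ha) (hxk ▸ hk2)
    exact ⟨⟨⟨ha, h1⟩, ⟨hb, h2⟩⟩, hxk ▸ hk2, hxk ▸ hpk⟩
  · rintro ⟨⟨⟨hx1, hx2⟩, ⟨hy1, hy2⟩⟩, hle, hdvd⟩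
    exact ⟨x.1 * x.2, ⟨⟨Nat.one_le_iff_ne_zero.mpr (Nat.mul_ne_zero (by omega) (by omega)), hle⟩,
      hdvd⟩, rfl, Nat.mul_ne_zero (by omega) (by omega)⟩

lemma pd (n p : ℕ) : (↑((Icc 1 n).filter (fun k => p ∣ k)) : Set ℕ).PairwiseDisjoint
    Nat.divisorsAntidiagonal := by
  intro a _ b _ hab
  simp only [Function.onFun, Finset.disjoint_left]
  intro x hxa hxb
  rw [Nat.mem_divisorsAntidiagonal] at hxa hxb
  exact hab (hxa.1.symm.trans hxb.1)

lemma delta_eq1 (n p : ℕ) :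
    (Delta n p : ℝ) = ∑ x ∈ ((Icc 1 n) ×ˢ (Icc 1 n)).filter
        (fun x => x.1 * x.2 ≤ n ∧ p ∣ x.1 * x.2), (μ x.1 : ℝ) * x.2 := by
  rw [Delta, Nat.cast_sum, ← biUnion_eq, Finset.sum_biUnion (pd n p)]
  refine Finset.sum_congr rfl fun k hk => ?_
  simp only [mem_filter, mem_Icc] at hk
  exact totient_moebius k (by omega)

lemma delta_eq2 (n p : ℕ) (hp : p.Prime) :
    (Delta n p : ℝ) = ∑ d ∈ Icc 1 n, (μ d : ℝ) *
      (if p ∣ d then (∑ e ∈ Icc 1 (n / d), (e : ℝ))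
        else (p : ℝ) * ∑ e ∈ Icc 1 (n / (d * p)), (e : ℝ)) := by
  rw [delta_eq1, Finset.sum_filter, Finset.sum_product]
  refine Finset.sum_congr rfl fun d hd => ?_
  have hd1 : 1 ≤ d := (mem_Icc.mp hd).1
  have hdn : d ≤ n := (mem_Icc.mp hd).2
  have step1 : (∑ e ∈ Icc 1 n, if d * e ≤ n ∧ p ∣ d * e then (μ d : ℝ) * e else 0)
      = ∑ e ∈ Icc 1 (n / d), if p ∣ d * e then (μ d : ℝ) * e else 0 := by
    rw [← Finset.sum_subset (Finset.Icc_subset_Icc le_rfl (Nat.div_le_self n d))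
      (fun e he hne => ?_)]
    · refine Finset.sum_congr rfl fun e he => ?_
      have hmul : d * e ≤ n := by
        rw [mem_Icc] at he
        have := (Nat.le_div_iff_mul_le (show 0 < d from hd1)).mp he.2
        linarith [this, Nat.mul_comm e d]
      simp [hmul]
    · rw [mem_Icc] at he hne
      have : ¬ (d * e ≤ n) := by
        intro hc
        exact hne ⟨he.1, (Nat.le_div_iff_mul_le (show 0 < d from hd1)).mpr
          (by rw [Nat.mul_comm]; exact hc)⟩
      simp [this]
  rw [step1, ← Finset.sum_filter]
  by_cases hpd : p ∣ d
  · rw [if_pos hpd, Finset.filter_true_of_mem (fun e _ => (hpd.mul_right e)), Finset.mul_sum]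
  · rw [if_neg hpd]
    have hfe : (Icc 1 (n / d)).filter (fun e => p ∣ d * e)
        = (Icc 1 (n / d)).filter (fun e => p ∣ e) := by
      refine Finset.filter_congr fun e _ => ?_
      constructor
      · intro h
        rcases (Nat.Prime.dvd_mul hp).mp h with h' | h'
        · exact absurd h' hpd
        · exact h'
      · exact fun h => h.mul_left d
    rw [hfe]
    have himg : (Icc 1 (n / d)).filter (fun e => p ∣ e)
        = (Icc 1 (n / d / p)).image (fun f => p * f) := by
      ext k
      simp only [mem_filter, mem_Icc, mem_image]
      constructor
      · rintro ⟨⟨hk1, hk2⟩, hpk⟩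
        refine ⟨k / p, ⟨?_, Nat.div_le_div_right hk2⟩, Nat.mul_div_cancel' hpk⟩
        rw [Nat.one_le_div_iff hp.pos]
        exact Nat.le_of_dvd hk1 hpk
      · rintro ⟨f, ⟨hf1, hf2⟩, rfl⟩
        refine ⟨⟨Nat.mul_pos hp.pos hf1, ?_⟩, Dvd.intro f rfl⟩
        calc p * f ≤ p * (n / d / p) := Nat.mul_le_mul_left p hf2
          _ ≤ n / d := by rw [Nat.mul_comm]; exact Nat.div_mul_le_self _ _
    rw [himg, Finset.sum_image (fun a _ b _ h => Nat.eq_of_mul_eq_mul_left hp.pos h)]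
    rw [Nat.div_div_eq_div_mul, Nat.mul_comm d p, Nat.mul_comm p d]
    rw [Finset.mul_sum, Finset.mul_sum]
    refine Finset.sum_congr rfl fun f _ => ?_
    push_cast
    ring

/-! ### The Möbius series -/

noncomputable def Mc : ℝ := ∑' d : ℕ, (μ d : ℝ) / (d : ℝ) ^ 2

noncomputable def cf (p d : ℕ) : ℝ :=
  ((μ d : ℝ) / (d : ℝ) ^ 2) * (if p ∣ d then 1 else 1 / (p : ℝ))

noncomputable def gf (p d : ℕ) : ℝ := if p ∣ d then (μ d : ℝ) / (d : ℝ) ^ 2 else 0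

lemma summable_base : Summable (fun d : ℕ => 1 / (d : ℝ) ^ 2) :=
  summable_one_div_nat_pow.mpr one_lt_two

lemma abs_mu_div_le (d : ℕ) : |(μ d : ℝ) / (d : ℝ) ^ 2| ≤ 1 / (d : ℝ) ^ 2 := by
  rcases Nat.eq_zero_or_pos d with rfl | hd
  · simp
  · have h2 : (0:ℝ) < (d:ℝ)^2 := by positivity
    rw [abs_div, abs_of_nonneg h2.le]
    exact (div_le_div_iff_of_pos_right h2).mpr (abs_moebius_le_one d)

lemma summable_mu : Summable (fun d : ℕ => (μ d : ℝ) / (d : ℝ) ^ 2) :=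
  Summable.of_norm_bounded summable_base abs_mu_div_le

lemma cf_abs (p d : ℕ) (hp : 1 ≤ p) : |cf p d| ≤ 1 / (d : ℝ) ^ 2 := by
  have hp1 : (1:ℝ) ≤ p := by exact_mod_cast hp
  rw [cf, abs_mul]
  have h1 : |if p ∣ d then (1:ℝ) else 1 / (p:ℝ)| ≤ 1 := by
    split
    · simp
    · rw [abs_of_nonneg (by positivity)]
      rw [div_le_one (by linarith)]
      exact hp1
  calc |(μ d : ℝ) / (d : ℝ) ^ 2| * |if p ∣ d then (1:ℝ) else 1 / (p:ℝ)|
      ≤ (1 / (d : ℝ) ^ 2) * 1 := by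
        apply mul_le_mul (abs_mu_div_le d) h1 (abs_nonneg _) (by positivity)
    _ = 1 / (d : ℝ) ^ 2 := by ring

lemma gf_abs (p d : ℕ) : |gf p d| ≤ 1 / (d : ℝ) ^ 2 := by
  rw [gf]
  split
  · exact abs_mu_div_le d
  · rw [abs_zero]; positivity

lemma summable_cf (p : ℕ) (hp : 1 ≤ p) : Summable (cf p) :=
  Summable.of_norm_bounded summable_base (fun d => cf_abs p d hp)

lemma summable_gf (p : ℕ) : Summable (gf p) :=
  Summable.of_norm_bounded summable_base (gf_abs p)

lemma Mc_eq : Mc = 6 / π ^ 2 := by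
  have hz := LSeries_zeta_mul_Lseries_moebius (s := 2) (by norm_num)
  rw [LSeries_zeta_eq_riemannZeta (by norm_num), riemannZeta_two] at hz
  have hL : LSeries (fun n => (μ n : ℂ)) 2 = ((Mc : ℝ) : ℂ) := by
    rw [Mc, Complex.ofReal_tsum, LSeries]
    refine tsum_congr fun n => ?_
    rcases eq_or_ne n 0 with rfl | hn
    · simp [LSeries.term_zero]
    · rw [LSeries.term_of_ne_zero hn]
      rw [show (2:ℂ) = ((2:ℕ):ℂ) by norm_num, Complex.cpow_natCast]
      push_cast
      ring
  rw [hL] at hz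
  have hπ : (π:ℝ) ≠ 0 := pi_ne_zero
  have h1 : ((π ^ 2 / 6 * Mc : ℝ) : ℂ) = ((1 : ℝ) : ℂ) := by
    push_cast
    rw [← hz]
  have h2 : (π ^ 2 / 6 * Mc : ℝ) = 1 := Complex.ofReal_inj.mp h1
  field_simp at h2 ⊢
  linarith

lemma mu_prime_mul (p e : ℕ) (hp : p.Prime) :
    (μ (p * e) : ℝ) = if p ∣ e then 0 else -(μ e : ℝ) := by
  split
  · rename_i h
    rcases Nat.eq_zero_or_pos e with rfl | he
    · simp
    · have : ¬ Squarefree (p * e) := by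
        intro hsq
        have hdvd : p * p ∣ p * e := mul_dvd_mul_left p h
        have := hsq p hdvd
        exact hp.ne_one (Nat.isUnit_iff.mp this)
      rw [moebius_eq_zero_of_not_squarefree this]
      simp
  · rename_i h
    by_cases hsq : Squarefree e
    · have hcop : Nat.Coprime p e := (Nat.Prime.coprime_iff_not_dvd hp).mpr h
      rw [isMultiplicative_moebius.map_mul_of_coprime hcop, moebius_apply_prime hp]
      push_cast
      ring
    · have h1 : ¬ Squarefree (p * e) := fun hc => hsq (hc.squarefree_of_dvd (Dvd.intro_left p rfl))
      rw [moebius_eq_zero_of_not_squarefree h1, moebius_eq_zero_of_not_squarefree hsq]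
      simp

lemma gf_eq (p : ℕ) (hp : p.Prime) :
    ∑' d, gf p d = -(Mc / ((p:ℝ) ^ 2 - 1)) := by
  have hp0 : (0:ℝ) < p := by exact_mod_cast hp.pos
  have hp2 : (2:ℝ) ≤ p := by exact_mod_cast hp.two_le
  have hinj : Function.Injective (fun e : ℕ => p * e) := fun a b h => by
    exact Nat.eq_of_mul_eq_mul_left hp.pos h
  have hsupp : Function.support (gf p) ⊆ Set.range (fun e : ℕ => p * e) := by
    intro d hd
    rw [Function.mem_support, gf] at hd
    split at hd
    · rename_i h
      exact ⟨d / p, (Nat.mul_div_cancel' h)⟩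
    · exact absurd rfl hd
  have hre : ∑' e : ℕ, gf p (p * e) = ∑' d, gf p d := hinj.tsum_eq hsupp
  have hterm : ∀ e : ℕ, gf p (p * e) =
      -(1 / (p:ℝ)^2) * ((μ e : ℝ) / (e : ℝ) ^ 2 - gf p e) := by
    intro e
    rw [gf, if_pos (Dvd.intro e rfl), mu_prime_mul p e hp, gf]
    by_cases h : p ∣ e
    · rw [if_pos h, if_pos h]
      ring
    · rw [if_neg h, if_neg h]
      rcases Nat.eq_zero_or_pos e with rfl | he
      · exact absurd (dvd_zero p) h
      · have he0 : ((e:ℝ)) ≠ 0 := by positivity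
        have hc : ((p * e : ℕ) : ℝ) ^ 2 = (p:ℝ) ^ 2 * (e:ℝ) ^ 2 := by push_cast; ring
        rw [sub_zero, hc]
        field_simp
  have hsum : ∑' e : ℕ, gf p (p * e)
      = -(1 / (p:ℝ)^2) * (Mc - ∑' d, gf p d) := by
    rw [tsum_congr hterm, tsum_mul_left, summable_mu.tsum_sub (summable_gf p), Mc]
  rw [hsum] at hre
  have hne : (p:ℝ)^2 - 1 ≠ 0 := by nlinarith
  have hne2 : (p:ℝ)^2 ≠ 0 := by positivity
  field_simp at hre ⊢
  linarith

lemma cf_decomp (p d : ℕ) :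
    cf p d = (1/(p:ℝ)) * ((μ d : ℝ)/(d:ℝ)^2) + (1 - 1/(p:ℝ)) * gf p d := by
  rw [cf, gf]; split <;> ring

lemma tsum_cf (p : ℕ) (hp : p.Prime) : ∑' d, cf p d = Mc / ((p:ℝ) + 1) := by
  have hp0 : (0:ℝ) < p := by exact_mod_cast hp.pos
  have hp2 : (2:ℝ) ≤ p := by exact_mod_cast hp.two_le
  have h1 : ∑' d, cf p d = (1/(p:ℝ)) * Mc + (1 - 1/(p:ℝ)) * ∑' d, gf p d := by
    rw [tsum_congr (fun d => cf_decomp p d),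
      Summable.tsum_add (summable_mu.mul_left _) ((summable_gf p).mul_left _),
      tsum_mul_left, tsum_mul_left, Mc]
  rw [h1, gf_eq p hp]
  have hne : (p:ℝ)^2 - 1 ≠ 0 := by nlinarith
  have hne2 : (p:ℝ) + 1 ≠ 0 := by nlinarith
  field_simp
  ring

lemma partial_close (p n : ℕ) (hp : p.Prime) (hn : 1 ≤ n) :
    |(∑ d ∈ Icc 1 n, cf p d) - ∑' d, cf p d| ≤ 1/(n:ℝ) := by
  have hs := (summable_cf p hp.one_le).hasSum
  set P := ∑ d ∈ Icc 1 n, cf p d with hP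
  have key : ∀ N, n + 1 ≤ N → |(∑ d ∈ range N, cf p d) - P| ≤ 1/(n:ℝ) := by
    intro N hN
    have h1 : ∑ d ∈ range (n+1), cf p d = P := by
      have hr : range (n+1) = insert 0 (Icc 1 n) := by
        ext x; simp only [mem_range, mem_insert, mem_Icc]; omega
      have hc0 : cf p 0 = 0 := by simp [cf]
      rw [hr, sum_insert (by simp), hc0, zero_add]
    have h2 : (∑ d ∈ range N, cf p d) - P = ∑ d ∈ Ico (n+1) N, cf p d := by
      rw [← h1, Finset.sum_Ico_eq_sub _ hN]
    rw [h2]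
    have hIoc : Ico (n+1) N = Ioc n (N-1) := by ext x; simp [mem_Ico, mem_Ioc]; omega
    calc |∑ d ∈ Ico (n+1) N, cf p d| ≤ ∑ d ∈ Ico (n+1) N, |cf p d| :=
          Finset.abs_sum_le_sum_abs _ _
      _ ≤ ∑ d ∈ Ico (n+1) N, ((d:ℝ)^2)⁻¹ :=
          Finset.sum_le_sum fun d _ => by simpa [one_div] using cf_abs p d hp.one_le
      _ = ∑ d ∈ Ioc n (N-1), ((d:ℝ)^2)⁻¹ := by rw [hIoc]
      _ ≤ ((n:ℝ))⁻¹ - (((N-1:ℕ)):ℝ)⁻¹ := sum_Ioc_inv_sq_le_sub (by omega) (by omega)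
      _ ≤ 1/(n:ℝ) := by
          have : (0:ℝ) ≤ (((N-1:ℕ)):ℝ)⁻¹ := by positivity
          rw [one_div]; linarith
  have ht : Tendsto (fun N => |(∑ d ∈ range N, cf p d) - P|) atTop
      (𝓝 |(∑' d, cf p d) - P|) := ((hs.tendsto_sum_nat.sub tendsto_const_nhds).abs)
  have := le_of_tendsto ht (Filter.eventually_atTop.mpr ⟨n+1, key⟩)
  rwa [abs_sub_comm] at this

lemma sum_inv_le (n : ℕ) : ∑ d ∈ Icc 1 n, 1/(d:ℝ) ≤ 1 + Real.log n := by
  have h := harmonic_le_one_add_log n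
  have he : (harmonic n : ℝ) = ∑ d ∈ Icc 1 n, 1/(d:ℝ) := by
    rw [harmonic]
    push_cast
    have : Icc 1 n = Ico 1 (n+1) := by ext x; simp [mem_Icc, mem_Ico]
    rw [this, Finset.sum_Ico_eq_sum_range]
    simp only [Nat.add_sub_cancel]
    refine Finset.sum_congr rfl fun i _ => ?_
    push_cast
    rw [one_div, add_comm]
  linarith [he ▸ h]

/-! ### Termwise error -/

lemma term_bound (n p d : ℕ) (hp : p.Prime) (hd1 : 1 ≤ d) :
    |(μ d : ℝ) * (if p ∣ d then (∑ e ∈ Icc 1 (n / d), (e : ℝ))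
        else (p : ℝ) * ∑ e ∈ Icc 1 (n / (d * p)), (e : ℝ))
      - (n:ℝ)^2/2 * cf p d| ≤ (n:ℝ)/d := by
  have hd0 : ((d:ℝ)) ≠ 0 := by positivity
  have hp0 : (0:ℝ) < p := by exact_mod_cast hp.pos
  by_cases hpd : p ∣ d
  · have heq : (μ d : ℝ) * (∑ e ∈ Icc 1 (n / d), (e : ℝ)) - (n:ℝ)^2/2 * cf p d
        = (μ d : ℝ) * ((∑ e ∈ Icc 1 (n / d), (e : ℝ)) - ((n:ℝ)/d)^2/2) := by
      rw [cf, if_pos hpd]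
      field_simp
    rw [if_pos hpd, heq, abs_mul]
    calc |(μ d : ℝ)| * |(∑ e ∈ Icc 1 (n / d), (e : ℝ)) - ((n:ℝ)/d)^2/2|
        ≤ 1 * ((n:ℝ)/d) := by
          apply mul_le_mul (abs_moebius_le_one d) (Tbound n d hd1) (abs_nonneg _) one_pos.le
      _ = (n:ℝ)/d := one_mul _
  · have hdp1 : 1 ≤ d * p := Nat.mul_pos hd1 hp.pos
    have hcast : ((d * p : ℕ) : ℝ) = (d:ℝ) * p := by push_cast; ring
    have heq : (μ d : ℝ) * ((p : ℝ) * ∑ e ∈ Icc 1 (n / (d * p)), (e : ℝ))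
        - (n:ℝ)^2/2 * cf p d
        = (μ d : ℝ) * (p:ℝ) * ((∑ e ∈ Icc 1 (n / (d * p)), (e : ℝ))
            - ((n:ℝ)/((d:ℝ)*p))^2/2) := by
      rw [cf, if_neg hpd]
      field_simp
    rw [if_neg hpd, heq, abs_mul, abs_mul, abs_of_pos hp0]
    have hT := Tbound n (d * p) hdp1
    rw [hcast] at hT
    calc |(μ d : ℝ)| * (p:ℝ) * |(∑ e ∈ Icc 1 (n / (d * p)), (e : ℝ))
          - ((n:ℝ)/((d:ℝ)*p))^2/2|
        ≤ 1 * (p:ℝ) * ((n:ℝ)/((d:ℝ)*p)) := by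
          apply mul_le_mul (by
            apply mul_le_mul_of_nonneg_right (abs_moebius_le_one d) hp0.le) hT (abs_nonneg _)
            (by positivity)
      _ = (n:ℝ)/d := by field_simp

end DeltaAux

/-- There is an absolute constant `C > 0` such that for every prime `p` and integer
`n ≥ 2`, `|Δ(n,p) - 3n²/(π²(p+1))| ≤ C·n·log n`. -/
theorem stmt_9 :
    ∃ C : ℝ, C > 0 ∧ ∀ p : ℕ, p.Prime → ∀ n : ℕ, 2 ≤ n →
      |(Delta n p : ℝ) - 3 * (n : ℝ) ^ 2 / (Real.pi ^ 2 * (p + 1))| ≤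
        C * n * Real.log n := by
  classical
  refine ⟨10, by norm_num, fun p hp n hn => ?_⟩
  open DeltaAux Real ArithmeticFunction ArithmeticFunction.Moebius in
  have hn1 : 1 ≤ n := by omega
  have hn0 : (0:ℝ) < n := by exact_mod_cast (by omega : 0 < n)
  have hn2 : (2:ℝ) ≤ n := by exact_mod_cast hn
  have hp1 : (0:ℝ) < (p:ℝ) + 1 := by positivity
  have hπ : (0:ℝ) < π ^ 2 := by positivity
  -- Step 1: |Δ - n²/2 * partial sum of cf| ≤ n(1+log n)
  have step1 : |(Delta n p : ℝ) - (n:ℝ)^2/2 * ∑ d ∈ Finset.Icc 1 n, DeltaAux.cf p d|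
      ≤ (n:ℝ) * (1 + Real.log n) := by
    rw [DeltaAux.delta_eq2 n p hp, Finset.mul_sum, ← Finset.sum_sub_distrib]
    calc |∑ d ∈ Finset.Icc 1 n, ((μ d : ℝ) *
          (if p ∣ d then (∑ e ∈ Finset.Icc 1 (n / d), (e : ℝ))
            else (p : ℝ) * ∑ e ∈ Finset.Icc 1 (n / (d * p)), (e : ℝ))
          - (n:ℝ)^2/2 * DeltaAux.cf p d)|
        ≤ ∑ d ∈ Finset.Icc 1 n, (n:ℝ)/d := by
          refine (Finset.abs_sum_le_sum_abs _ _).trans (Finset.sum_le_sum fun d hd => ?_)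
          exact DeltaAux.term_bound n p d hp (Finset.mem_Icc.mp hd).1
      _ = (n:ℝ) * ∑ d ∈ Finset.Icc 1 n, 1/(d:ℝ) := by
          rw [Finset.mul_sum]; exact Finset.sum_congr rfl fun d _ => by ring
      _ ≤ (n:ℝ) * (1 + Real.log n) :=
          mul_le_mul_of_nonneg_left (DeltaAux.sum_inv_le n) hn0.le
  -- Step 2: partial sum close to tsum
  have step2 : |(n:ℝ)^2/2 * ∑ d ∈ Finset.Icc 1 n, DeltaAux.cf p d
      - (n:ℝ)^2/2 * (DeltaAux.Mc / ((p:ℝ)+1))| ≤ (n:ℝ)/2 := by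
    rw [← mul_sub, abs_mul, abs_of_nonneg (by positivity : (0:ℝ) ≤ (n:ℝ)^2/2),
      ← DeltaAux.tsum_cf p hp]
    calc (n:ℝ)^2/2 * |(∑ d ∈ Finset.Icc 1 n, DeltaAux.cf p d) - ∑' d, DeltaAux.cf p d|
        ≤ (n:ℝ)^2/2 * (1/(n:ℝ)) := by
          exact mul_le_mul_of_nonneg_left (DeltaAux.partial_close p n hp hn1) (by positivity)
      _ = (n:ℝ)/2 := by field_simp
  -- Step 3: main term identification
  have step3 : (n:ℝ)^2/2 * (DeltaAux.Mc / ((p:ℝ)+1))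
      = 3 * (n : ℝ) ^ 2 / (π ^ 2 * ((p:ℝ) + 1)) := by
    rw [DeltaAux.Mc_eq]
    field_simp
    ring
  have htot : |(Delta n p : ℝ) - 3 * (n : ℝ) ^ 2 / (π ^ 2 * ((p:ℝ) + 1))|
      ≤ (n:ℝ) * (1 + Real.log n) + (n:ℝ)/2 := by
    rw [← step3]
    calc |(Delta n p : ℝ) - (n:ℝ)^2/2 * (DeltaAux.Mc / ((p:ℝ)+1))|
        ≤ |(Delta n p : ℝ) - (n:ℝ)^2/2 * ∑ d ∈ Finset.Icc 1 n, DeltaAux.cf p d|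
          + |(n:ℝ)^2/2 * ∑ d ∈ Finset.Icc 1 n, DeltaAux.cf p d
            - (n:ℝ)^2/2 * (DeltaAux.Mc / ((p:ℝ)+1))| := abs_sub_le _ _ _
      _ ≤ (n:ℝ) * (1 + Real.log n) + (n:ℝ)/2 := add_le_add step1 step2
  refine htot.trans ?_
  have hlog2 : (0.6931471803:ℝ) < Real.log 2 := Real.log_two_gt_d9
  have hlog : Real.log 2 ≤ Real.log n := Real.log_le_log (by norm_num) hn2
  nlinarith [mul_pos hn0 (lt_of_lt_of_le (by linarith : (0:ℝ) < Real.log 2) hlog)]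
end

section
/- The summatory totient function satisfies the asymptotic formula Ψ(x) = (3/π²) x² + O(x log x) as x → ∞. -/
open Finset Filter Asymptotics ArithmeticFunction
open scoped ArithmeticFunction.Moebius

lemma mu_abs (d : ℕ) : |(μ d : ℝ)| ≤ 1 := by
  rw [show ((μ d : ℤ) : ℝ) = ((μ d : ℤ) : ℝ) from rfl, ← Int.cast_abs]
  exact_mod_cast abs_moebius_le_one

lemma mu_summable : Summable (fun d : ℕ => (μ d : ℝ) / d ^ 2) := by
  apply Summable.of_abs
  apply Summable.of_nonneg_of_le (fun d => abs_nonneg _) (fun d => ?_)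
    (Real.summable_one_div_nat_pow.mpr one_lt_two)
  rw [abs_div, abs_of_nonneg (by positivity : (0:ℝ) ≤ (d:ℝ)^2)]
  rcases Nat.eq_zero_or_pos d with h | h
  · simp [h]
  · apply div_le_div_of_nonneg_right (mu_abs d) (by positivity)

noncomputable def S : ℝ := ∑' d : ℕ, (μ d : ℝ) / d ^ 2

lemma S_val : S = 6 / Real.pi ^ 2 := by
  have hpi : (Real.pi : ℝ) ≠ 0 := Real.pi_ne_zero
  have h2 : (1 : ℝ) < (2 : ℂ).re := by norm_num
  have hz := LSeries_zeta_mul_Lseries_moebius h2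
  rw [LSeries_zeta_eq_riemannZeta h2, riemannZeta_two] at hz
  have hL : LSeries (fun n => (μ n : ℂ)) 2 = ((S : ℝ) : ℂ) := by
    rw [S, Complex.ofReal_tsum]
    unfold LSeries
    apply tsum_congr
    intro n
    rcases Nat.eq_zero_or_pos n with h | h
    · simp [h, LSeries.term]
    · rw [LSeries.term_of_ne_zero h.ne']
      rw [Complex.cpow_two]
      push_cast
      ring
  rw [hL] at hz
  have : ((S:ℝ):ℂ) = ((6 / Real.pi^2 : ℝ) : ℂ) := by
    push_cast
    have hp2 : ((Real.pi:ℂ))^2 ≠ 0 := by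
      simpa using Complex.ofReal_ne_zero.mpr hpi
    field_simp at hz ⊢
    linear_combination hz
  exact_mod_cast this


set_option maxHeartbeats 1000000 in
lemma tail_bound (N : ℕ) (hN : 1 ≤ N) :
    |S - ∑ d ∈ Icc 1 N, (μ d : ℝ) / d ^ 2| ≤ 1 / N := by
  set f : ℕ → ℝ := fun d => (μ d : ℝ) / d ^ 2 with hf
  have hpart : ∑ d ∈ Finset.range (N + 1), f d = ∑ d ∈ Icc 1 N, f d := by
    rw [Finset.range_eq_Ico, Finset.sum_eq_sum_Ico_succ_bot (by omega)]
    rw [show f 0 = 0 by simp [hf], zero_add, Finset.Ico_add_one_right_eq_Icc]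
  have hsplit := (Summable.sum_add_tsum_nat_add (f := f) (N + 1) mu_summable).symm
  have htail : S - ∑ d ∈ Icc 1 N, f d = ∑' k, f (k + (N + 1)) := by
    rw [show S = ∑' d, f d from rfl, hsplit, hpart]; ring
  rw [htail]
  set g : ℕ → ℝ := fun k => (((k + (N + 1) : ℕ) : ℝ) ^ 2)⁻¹ with hg
  have hgsum : Summable g := by
    have := (summable_nat_add_iff (f := fun n : ℕ => ((n : ℝ) ^ 2)⁻¹) (N + 1)).mpr
      (Real.summable_nat_pow_inv.mpr one_lt_two)
    simpa [hg] using this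
  have hfsum : Summable fun k => |f (k + (N + 1))| :=
    ((summable_nat_add_iff (N + 1)).mpr mu_summable).abs
  have hle : ∀ k, |f (k + (N + 1))| ≤ g k := by
    intro k
    have hk : (0:ℝ) < ((k + (N+1) : ℕ) : ℝ) ^ 2 := by positivity
    rw [hf, hg]
    simp only [abs_div, abs_of_pos hk]
    rw [div_le_iff₀ hk, inv_mul_cancel₀ hk.ne']
    exact mu_abs _
  have step1 : |∑' k, f (k + (N + 1))| ≤ ∑' k, |f (k + (N + 1))| := by
    have := norm_tsum_le_tsum_norm (f := fun k => f (k + (N + 1))) ?_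
    · simpa only [Real.norm_eq_abs] using this
    · simpa only [Real.norm_eq_abs] using hfsum
  have step2 : ∑' k, |f (k + (N + 1))| ≤ ∑' k, g k := Summable.tsum_le_tsum hle hfsum hgsum
  refine (step1.trans (step2.trans ?_))
  apply Real.tsum_le_of_sum_range_le (fun k => by positivity)
  intro M
  have hre : ∑ k ∈ Finset.range M, g k = ∑ i ∈ Ioc N (N + M), ((i:ℝ)^2)⁻¹ := by
    rw [← Finset.Ico_add_one_add_one_eq_Ioc, Finset.sum_Ico_eq_sum_range]
    apply Finset.sum_congr (by congr 1; omega)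
    intro k _
    have hkn : N + 1 + k = k + (N + 1) := by omega
    simp only [hg, hkn]
  rw [hre]
  calc ∑ i ∈ Ioc N (N + M), ((i:ℝ)^2)⁻¹ ≤ (N:ℝ)⁻¹ - ((N+M:ℕ):ℝ)⁻¹ :=
        sum_Ioc_inv_sq_le_sub (by omega) (by omega)
    _ ≤ 1 / N := by
        rw [one_div]
        have : (0:ℝ) ≤ ((N+M:ℕ):ℝ)⁻¹ := by positivity
        linarith
lemma totient_eq (n : ℕ) (hn : 0 < n) :
    (Nat.totient n : ℝ) = ∑ p ∈ n.divisorsAntidiagonal, (μ p.1 : ℝ) * p.2 := by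
  have h := (sum_eq_iff_sum_mul_moebius_eq (R := ℝ)
      (f := fun n => (Nat.totient n : ℝ)) (g := fun n => (n : ℝ))).mp ?_ n hn
  · exact h.symm
  · intro m hm
    exact_mod_cast congrArg (Nat.cast : ℕ → ℝ) (Nat.sum_totient m)

lemma swap_sum (N : ℕ) (g : ℕ → ℕ → ℝ) :
    ∑ n ∈ Icc 1 N, ∑ p ∈ n.divisorsAntidiagonal, g p.1 p.2
      = ∑ d ∈ Icc 1 N, ∑ q ∈ Icc 1 (N / d), g d q := by
  rw [Finset.sum_sigma', Finset.sum_sigma']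
  apply Finset.sum_nbij' (fun p => (⟨p.2.1, p.2.2⟩ : Σ _ : ℕ, ℕ))
    (fun p => (⟨p.1 * p.2, (p.1, p.2)⟩ : Σ _ : ℕ, ℕ × ℕ))
  · rintro ⟨n, p⟩ hp
    simp only [Finset.mem_sigma, Finset.mem_Icc, Nat.mem_divisorsAntidiagonal] at hp ⊢
    obtain ⟨⟨h1, h2⟩, h3, h4⟩ := hp
    have hp1 : 0 < p.1 := Nat.pos_of_ne_zero (fun h0 => by rw [h0, zero_mul] at h3; omega)
    have hp2 : 0 < p.2 := Nat.pos_of_ne_zero (fun h0 => by rw [h0, mul_zero] at h3; omega)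
    refine ⟨⟨hp1, ?_⟩, hp2, ?_⟩
    · calc p.1 ≤ p.1 * p.2 := Nat.le_mul_of_pos_right _ hp2
        _ ≤ N := by omega
    · rw [Nat.le_div_iff_mul_le hp1, mul_comm]
      omega
  · rintro ⟨d, q⟩ hq
    simp only [Finset.mem_sigma, Finset.mem_Icc, Nat.mem_divisorsAntidiagonal] at hq ⊢
    obtain ⟨⟨h1, h2⟩, h3, h4⟩ := hq
    rw [Nat.le_div_iff_mul_le h1] at h4
    rw [mul_comm] at h4
    refine ⟨⟨?_, h4⟩, trivial, Nat.mul_ne_zero (by omega) (by omega)⟩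
    exact Nat.one_le_iff_ne_zero.mpr (Nat.mul_ne_zero (by omega) (by omega))
  · rintro ⟨n, p⟩ hp
    simp only [Finset.mem_sigma, Nat.mem_divisorsAntidiagonal] at hp
    obtain ⟨-, h3, -⟩ := hp
    simp [h3]
  · rintro ⟨d, q⟩ _
    rfl
  · rintro ⟨n, p⟩ _
    rfl

lemma gauss (m : ℕ) : ∑ q ∈ Icc 1 m, (q : ℝ) = m * (m + 1) / 2 := by
  induction m with
  | zero => simp
  | succ k ih =>
    rw [Finset.sum_Icc_succ_top (by omega), ih]
    push_cast
    ring

lemma psi_eq (N : ℕ) :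
    (∑ n ∈ Icc 1 N, (Nat.totient n : ℝ))
      = ∑ d ∈ Icc 1 N, (μ d : ℝ) * (((N / d : ℕ) : ℝ) * ((N / d : ℕ) + 1) / 2) := by
  rw [Finset.sum_congr rfl (fun n hn => totient_eq n (Finset.mem_Icc.mp hn).1),
    swap_sum N (fun d q => (μ d : ℝ) * q)]
  apply Finset.sum_congr rfl
  intro d _
  rw [← Finset.mul_sum, gauss]

lemma key (x : ℝ) (hx : 3 ≤ x) :
    |(∑ n ∈ Icc 1 ⌊x⌋₊, (Nat.totient n : ℝ)) - 3 / Real.pi ^ 2 * x ^ 2|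
      ≤ 3 * (x * Real.log x) := by
  have hx0 : (0:ℝ) < x := by linarith
  set N := ⌊x⌋₊ with hN
  have hN3 : 3 ≤ N := Nat.le_floor (by exact_mod_cast hx)
  have hN0 : 0 < N := by omega
  have hNx : (N : ℝ) ≤ x := Nat.floor_le hx0.le
  have hxN1 : x < N + 1 := Nat.lt_floor_add_one x
  have hNhalf : x ≤ 2 * N := by linarith
  have hlogx : 1 ≤ Real.log x := by
    rw [Real.le_log_iff_exp_le hx0]
    calc Real.exp 1 ≤ 2.7182818286 := Real.exp_one_lt_d9.le
      _ ≤ x := by linarith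
  -- per-term bound
  have hterm : ∀ d ∈ Icc 1 N,
      |(μ d : ℝ) * (((N / d : ℕ) : ℝ) * ((N / d : ℕ) + 1) / 2)
        - x ^ 2 / 2 * ((μ d : ℝ) / d ^ 2)| ≤ x / d := by
    intro d hd
    obtain ⟨hd1, hd2⟩ := Finset.mem_Icc.mp hd
    have hd0 : (0:ℝ) < d := by exact_mod_cast hd1
    set t : ℝ := x / d with ht
    have ht0 : 0 ≤ t := by positivity
    have hm : N / d = ⌊t⌋₊ := by rw [ht, hN, ← Nat.floor_div_natCast]
    have hmt : ((N / d : ℕ) : ℝ) ≤ t := by rw [hm]; exact Nat.floor_le ht0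
    have htm : t < ((N / d : ℕ) : ℝ) + 1 := by rw [hm]; exact Nat.lt_floor_add_one t
    have hmpos : (0:ℝ) ≤ ((N / d : ℕ) : ℝ) := Nat.cast_nonneg _
    have hx2 : x ^ 2 / 2 * ((1:ℝ) / d ^ 2) = t ^ 2 / 2 := by
      rw [ht]; field_simp
    have hfact : (μ d : ℝ) * (((N / d : ℕ) : ℝ) * ((N / d : ℕ) + 1) / 2)
        - x ^ 2 / 2 * ((μ d : ℝ) / d ^ 2)
        = (μ d : ℝ) * ((((N / d : ℕ) : ℝ) * ((N / d : ℕ) + 1) / 2) - t ^ 2 / 2) := by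
      rw [mul_sub, ← hx2]; ring
    rw [hfact, abs_mul]
    calc |(μ d : ℝ)| * |(((N / d : ℕ) : ℝ) * ((N / d : ℕ) + 1) / 2) - t ^ 2 / 2|
        ≤ 1 * |(((N / d : ℕ) : ℝ) * ((N / d : ℕ) + 1) / 2) - t ^ 2 / 2| :=
          mul_le_mul_of_nonneg_right (mu_abs d) (abs_nonneg _)
      _ ≤ t := by
          rw [one_mul, abs_le]
          constructor <;> nlinarith [sq_nonneg (t - ((N / d : ℕ) : ℝ))]
  -- harmonic bound
  have hharm : ∑ d ∈ Icc 1 N, x / d ≤ 2 * (x * Real.log x) := by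
    have h1 : ∑ d ∈ Icc 1 N, x / d = x * ∑ d ∈ Icc 1 N, ((d:ℝ))⁻¹ := by
      rw [Finset.mul_sum]; exact Finset.sum_congr rfl fun d _ => div_eq_mul_inv x _
    have h2 : ∑ d ∈ Icc 1 N, ((d:ℝ))⁻¹ = (harmonic N : ℝ) := by
      rw [harmonic_eq_sum_Icc]; push_cast; rfl
    have h3 : (harmonic N : ℝ) ≤ 1 + Real.log N := harmonic_le_one_add_log N
    have h4 : Real.log N ≤ Real.log x := Real.log_le_log (by exact_mod_cast hN0) hNx
    rw [h1, h2]
    calc x * (harmonic N : ℝ) ≤ x * (1 + Real.log x) := by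
          apply mul_le_mul_of_nonneg_left _ hx0.le; linarith
      _ ≤ 2 * (x * Real.log x) := by nlinarith
  -- tail bound
  have htail : |x ^ 2 / 2 * ((∑ d ∈ Icc 1 N, (μ d : ℝ) / d ^ 2) - S)| ≤ x * Real.log x := by
    rw [abs_mul, abs_of_nonneg (by positivity : (0:ℝ) ≤ x ^ 2 / 2)]
    have := tail_bound N (by omega)
    have h5 : |(∑ d ∈ Icc 1 N, (μ d : ℝ) / d ^ 2) - S| ≤ 1 / N := by
      rw [abs_sub_comm]; exact this
    calc x ^ 2 / 2 * |(∑ d ∈ Icc 1 N, (μ d : ℝ) / d ^ 2) - S|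
        ≤ x ^ 2 / 2 * (1 / N) := mul_le_mul_of_nonneg_left h5 (by positivity)
      _ ≤ x := by
          have hNpos : (0:ℝ) < N := by exact_mod_cast hN0
          rw [mul_one_div, div_le_iff₀ hNpos]
          nlinarith
      _ ≤ x * Real.log x := by nlinarith
  -- combine
  have hS : 3 / Real.pi ^ 2 * x ^ 2 = x ^ 2 / 2 * S := by
    rw [S_val]; field_simp; ring
  rw [psi_eq N, hS]
  have hsplit : (∑ d ∈ Icc 1 N, (μ d : ℝ) * (((N / d : ℕ) : ℝ) * ((N / d : ℕ) + 1) / 2))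
      - x ^ 2 / 2 * S
      = (∑ d ∈ Icc 1 N, ((μ d : ℝ) * (((N / d : ℕ) : ℝ) * ((N / d : ℕ) + 1) / 2)
          - x ^ 2 / 2 * ((μ d : ℝ) / d ^ 2)))
        + x ^ 2 / 2 * ((∑ d ∈ Icc 1 N, (μ d : ℝ) / d ^ 2) - S) := by
    rw [Finset.sum_sub_distrib, ← Finset.mul_sum]; ring
  rw [hsplit]
  calc _ ≤ |∑ d ∈ Icc 1 N, ((μ d : ℝ) * (((N / d : ℕ) : ℝ) * ((N / d : ℕ) + 1) / 2)
          - x ^ 2 / 2 * ((μ d : ℝ) / d ^ 2))|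
        + |x ^ 2 / 2 * ((∑ d ∈ Icc 1 N, (μ d : ℝ) / d ^ 2) - S)| := abs_add_le _ _
    _ ≤ (∑ d ∈ Icc 1 N, x / d) + x * Real.log x := by
        apply add_le_add _ htail
        exact (Finset.abs_sum_le_sum_abs _ _).trans (Finset.sum_le_sum hterm)
    _ ≤ 2 * (x * Real.log x) + x * Real.log x := add_le_add hharm le_rfl
    _ = 3 * (x * Real.log x) := by ring

/-- `Ψ(x) = (3/π²)x² + O(x log x)` as `x → ∞`. -/
theorem stmt_12 :
    (fun x : ℝ =>
        (∑ n ∈ Finset.Icc 1 ⌊x⌋₊, (Nat.totient n : ℝ)) -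
          3 / Real.pi ^ 2 * x ^ 2)
      =O[atTop] fun x : ℝ => x * Real.log x := by
  rw [isBigO_iff]
  refine ⟨3, ?_⟩
  filter_upwards [eventually_ge_atTop (3:ℝ)] with x hx
  have h := key x hx
  have hlog : 0 ≤ Real.log x := Real.log_nonneg (by linarith)
  rw [Real.norm_eq_abs, Real.norm_eq_abs, abs_of_nonneg (by positivity : (0:ℝ) ≤ x * Real.log x)]
  exact h
end
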